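/- Let γ_AB be a pure bipartite quantum covariance matrix in xp-form, γ_AB = [[Q, 0],[0, Q^{-1}]]. Then I_M(A_x:B_x)_{γ_AB^x} = I_M(A_p:B_p)_{γ_AB^p} = (1/2) I_M(A:B)_{γ_AB} = M(γ_A), where M(X) := (1/2) log₂ det X. -/

import Mathlib

open Matrix

section Helpers

variable {m n : Type*} [Fintype m] [Fintype n] [DecidableEq m] [DecidableEq n]

lemma posDef_toBlocks₁₁ {Q : Matrix (m ⊕ n) (m ⊕ n) ℝ} (hQ : Q.PosDef) :
    Q.toBlocks₁₁.PosDef := by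
  refine PosDef.of_dotProduct_mulVec_pos ?_ ?_
  · ext i j
    simpa [conjTranspose_apply, toBlocks₁₁] using
      congrFun (congrFun hQ.1 (Sum.inl i)) (Sum.inl j)
  · intro x hx
    have hy : (Sum.elim x 0 : m ⊕ n → ℝ) ≠ 0 := by
      intro h
      exact hx (funext fun i => congrFun h (Sum.inl i))
    have h := hQ.dotProduct_mulVec_pos hy
    rw [← fromBlocks_toBlocks Q] at h
    simpa [fromBlocks_mulVec, mulVec_zero, star_trivial,
      sumElim_dotProduct_sumElim] using h

lemma posDef_toBlocks₂₂ {Q : Matrix (m ⊕ n) (m ⊕ n) ℝ} (hQ : Q.PosDef) :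
    Q.toBlocks₂₂.PosDef := by
  refine PosDef.of_dotProduct_mulVec_pos ?_ ?_
  · ext i j
    simpa [conjTranspose_apply, toBlocks₂₂] using
      congrFun (congrFun hQ.1 (Sum.inr i)) (Sum.inr j)
  · intro x hx
    have hy : (Sum.elim 0 x : m ⊕ n → ℝ) ≠ 0 := by
      intro h
      exact hx (funext fun i => congrFun h (Sum.inr i))
    have h := hQ.dotProduct_mulVec_pos hy
    rw [← fromBlocks_toBlocks Q] at h
    simpa [fromBlocks_mulVec, mulVec_zero, star_trivial,
      sumElim_dotProduct_sumElim] using h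

lemma det_inv_fromBlocks₁₁ (A : Matrix m m ℝ) (B : Matrix m n ℝ) (C : Matrix n m ℝ)
    (D : Matrix n n ℝ) [Invertible D] [Invertible (fromBlocks A B C D)] :
    ((fromBlocks A B C D)⁻¹).toBlocks₁₁.det = D.det / (fromBlocks A B C D).det := by
  letI iS : Invertible (A - B * ⅟D * C) := invertibleOfFromBlocks₂₂Invertible A B C D
  have h1 : (fromBlocks A B C D)⁻¹ = ⅟(fromBlocks A B C D) := (invOf_eq_nonsing_inv _).symm
  rw [h1, invOf_fromBlocks₂₂_eq, toBlocks_fromBlocks₁₁, det_fromBlocks₂₂,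
    invOf_eq_nonsing_inv, det_nonsing_inv, Ring.inverse_eq_inv']
  have hD : D.det ≠ 0 := ((isUnit_iff_isUnit_det D).1 (isUnit_of_invertible D)).ne_zero
  rw [div_mul_cancel_left₀ hD]

lemma det_inv_fromBlocks₂₂ (A : Matrix m m ℝ) (B : Matrix m n ℝ) (C : Matrix n m ℝ)
    (D : Matrix n n ℝ) [Invertible A] [Invertible (fromBlocks A B C D)] :
    ((fromBlocks A B C D)⁻¹).toBlocks₂₂.det = A.det / (fromBlocks A B C D).det := by
  letI iS : Invertible (D - C * ⅟A * B) := invertibleOfFromBlocks₁₁Invertible A B C D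
  have h1 : (fromBlocks A B C D)⁻¹ = ⅟(fromBlocks A B C D) := (invOf_eq_nonsing_inv _).symm
  rw [h1, invOf_fromBlocks₁₁_eq, toBlocks_fromBlocks₂₂, det_fromBlocks₁₁,
    invOf_eq_nonsing_inv, det_nonsing_inv, Ring.inverse_eq_inv']
  have hA : A.det ≠ 0 := ((isUnit_iff_isUnit_det A).1 (isUnit_of_invertible A)).ne_zero
  rw [div_mul_cancel_left₀ hA]

/-- Jacobi's identity: the determinant of the top-left block of the inverse. -/
lemma det_inv_toBlocks₁₁ {Q : Matrix (m ⊕ n) (m ⊕ n) ℝ} (hQ : Q.PosDef) :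
    (Q⁻¹).toBlocks₁₁.det = Q.toBlocks₂₂.det / Q.det := by
  letI : Invertible Q.toBlocks₂₂ :=
    invertibleOfIsUnitDet _ (posDef_toBlocks₂₂ hQ).det_pos.ne'.isUnit
  letI : Invertible (fromBlocks Q.toBlocks₁₁ Q.toBlocks₁₂ Q.toBlocks₂₁ Q.toBlocks₂₂) :=
    invertibleOfIsUnitDet _ (by rw [fromBlocks_toBlocks]; exact hQ.det_pos.ne'.isUnit)
  conv_lhs => rw [← fromBlocks_toBlocks Q]
  conv_rhs => rw [← fromBlocks_toBlocks Q]
  rw [det_inv_fromBlocks₁₁, toBlocks_fromBlocks₂₂]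

/-- Jacobi's identity: the determinant of the bottom-right block of the inverse. -/
lemma det_inv_toBlocks₂₂ {Q : Matrix (m ⊕ n) (m ⊕ n) ℝ} (hQ : Q.PosDef) :
    (Q⁻¹).toBlocks₂₂.det = Q.toBlocks₁₁.det / Q.det := by
  letI : Invertible Q.toBlocks₁₁ :=
    invertibleOfIsUnitDet _ (posDef_toBlocks₁₁ hQ).det_pos.ne'.isUnit
  letI : Invertible (fromBlocks Q.toBlocks₁₁ Q.toBlocks₁₂ Q.toBlocks₂₁ Q.toBlocks₂₂) :=
    invertibleOfIsUnitDet _ (by rw [fromBlocks_toBlocks]; exact hQ.det_pos.ne'.isUnit)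
  conv_lhs => rw [← fromBlocks_toBlocks Q]
  conv_rhs => rw [← fromBlocks_toBlocks Q]
  rw [det_inv_fromBlocks₂₂, toBlocks_fromBlocks₁₁]

end Helpers

/-- The log-determinant mutual information of a bipartite positive matrix. -/
noncomputable def IM {α β : Type*} [Fintype α] [Fintype β] [DecidableEq α] [DecidableEq β]
    (W : Matrix (α ⊕ β) (α ⊕ β) ℝ) : ℝ :=
  (1/2) * Real.logb 2 ((W.toBlocks₁₁.det * W.toBlocks₂₂.det) / W.det)

/-- For a pure bipartite QCM `γ_AB` in xp-form, i.e. whose x-part is `Q`, whose p-part is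
`Q⁻¹` and whose xp cross blocks vanish, one has
`I_M(A_x:B_x)_{γ^x} = I_M(A_p:B_p)_{γ^p} = (1/2) I_M(A:B)_γ = M(γ_A) = (1/2) log₂ det γ_A`. -/
theorem pure_xp_IM {a b : ℕ}
    (γ : Matrix ((Fin a ⊕ Fin a) ⊕ (Fin b ⊕ Fin b)) ((Fin a ⊕ Fin a) ⊕ (Fin b ⊕ Fin b)) ℝ)
    (Q : Matrix (Fin a ⊕ Fin b) (Fin a ⊕ Fin b) ℝ) (hQ : Q.PosDef)
    (hx : γ.submatrix (Sum.map Sum.inl Sum.inl : Fin a ⊕ Fin b → (Fin a ⊕ Fin a) ⊕ (Fin b ⊕ Fin b))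
            (Sum.map Sum.inl Sum.inl) = Q)
    (hp : γ.submatrix (Sum.map Sum.inr Sum.inr : Fin a ⊕ Fin b → (Fin a ⊕ Fin a) ⊕ (Fin b ⊕ Fin b))
            (Sum.map Sum.inr Sum.inr) = Q⁻¹)
    (hxp : γ.submatrix (Sum.map Sum.inl Sum.inl : Fin a ⊕ Fin b → (Fin a ⊕ Fin a) ⊕ (Fin b ⊕ Fin b))
            (Sum.map Sum.inr Sum.inr : Fin a ⊕ Fin b → (Fin a ⊕ Fin a) ⊕ (Fin b ⊕ Fin b)) = 0)
    (hpx : γ.submatrix (Sum.map Sum.inr Sum.inr : Fin a ⊕ Fin b → (Fin a ⊕ Fin a) ⊕ (Fin b ⊕ Fin b))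
            (Sum.map Sum.inl Sum.inl : Fin a ⊕ Fin b → (Fin a ⊕ Fin a) ⊕ (Fin b ⊕ Fin b)) = 0) :
    IM Q = IM Q⁻¹ ∧
    IM Q = (1/2) * IM γ ∧
    IM Q = (1/2) * Real.logb 2 γ.toBlocks₁₁.det := by
  -- abbreviations
  set A1 := Q.toBlocks₁₁.det with hA1
  set B1 := Q.toBlocks₂₂.det with hB1
  set d := Q.det with hd
  have hA1pos : 0 < A1 := (posDef_toBlocks₁₁ hQ).det_pos
  have hB1pos : 0 < B1 := (posDef_toBlocks₂₂ hQ).det_pos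
  have hdpos : 0 < d := hQ.det_pos
  have hdne : d ≠ 0 := hdpos.ne'
  -- determinants of the blocks of the inverse
  have hi11 : (Q⁻¹).toBlocks₁₁.det = B1 / d := det_inv_toBlocks₁₁ hQ
  have hi22 : (Q⁻¹).toBlocks₂₂.det = A1 / d := det_inv_toBlocks₂₂ hQ
  have hidet : (Q⁻¹).det = d⁻¹ := by
    rw [det_nonsing_inv, Ring.inverse_eq_inv']
  -- the reshuffling equivalence
  set e : (Fin a ⊕ Fin b) ⊕ (Fin a ⊕ Fin b) ≃ (Fin a ⊕ Fin a) ⊕ (Fin b ⊕ Fin b) :=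
    Equiv.sumSumSumComm (Fin a) (Fin b) (Fin a) (Fin b) with he
  have he1 : ∀ u : Fin a ⊕ Fin b, e (Sum.inl u) = Sum.map Sum.inl Sum.inl u := by
    rintro (u | u) <;> rfl
  have he2 : ∀ u : Fin a ⊕ Fin b, e (Sum.inr u) = Sum.map Sum.inr Sum.inr u := by
    rintro (u | u) <;> rfl
  have hγe : γ.submatrix e e = fromBlocks Q 0 0 Q⁻¹ := by
    ext i j
    rcases i with u | u <;> rcases j with v | v <;>
      simp only [submatrix_apply, he1, he2, fromBlocks_apply₁₁, fromBlocks_apply₁₂,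
        fromBlocks_apply₂₁, fromBlocks_apply₂₂, Matrix.zero_apply]
    · exact congrFun (congrFun hx u) v
    · exact congrFun (congrFun hxp u) v
    · exact congrFun (congrFun hpx u) v
    · exact congrFun (congrFun hp u) v
  have hγdet : γ.det = 1 := by
    rw [← det_submatrix_equiv_self e, hγe, det_fromBlocks_zero₁₂, hidet,
      mul_inv_cancel₀ hdne]
  -- the diagonal blocks of γ
  have hγ11 : γ.toBlocks₁₁ = fromBlocks Q.toBlocks₁₁ 0 0 (Q⁻¹).toBlocks₁₁ := by
    ext i j
    rcases i with u | u <;> rcases j with v | v <;>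
      simp only [toBlocks₁₁, of_apply, fromBlocks_apply₁₁, fromBlocks_apply₁₂,
        fromBlocks_apply₂₁, fromBlocks_apply₂₂, Matrix.zero_apply]
    · exact congrFun (congrFun hx (Sum.inl u)) (Sum.inl v)
    · exact congrFun (congrFun hxp (Sum.inl u)) (Sum.inl v)
    · exact congrFun (congrFun hpx (Sum.inl u)) (Sum.inl v)
    · exact congrFun (congrFun hp (Sum.inl u)) (Sum.inl v)
  have hγ22 : γ.toBlocks₂₂ = fromBlocks Q.toBlocks₂₂ 0 0 (Q⁻¹).toBlocks₂₂ := by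
    ext i j
    rcases i with u | u <;> rcases j with v | v <;>
      simp only [toBlocks₂₂, of_apply, fromBlocks_apply₁₁, fromBlocks_apply₁₂,
        fromBlocks_apply₂₁, fromBlocks_apply₂₂, Matrix.zero_apply]
    · exact congrFun (congrFun hx (Sum.inr u)) (Sum.inr v)
    · exact congrFun (congrFun hxp (Sum.inr u)) (Sum.inr v)
    · exact congrFun (congrFun hpx (Sum.inr u)) (Sum.inr v)
    · exact congrFun (congrFun hp (Sum.inr u)) (Sum.inr v)
  have hγ11det : γ.toBlocks₁₁.det = A1 * (B1 / d) := by
    rw [hγ11, det_fromBlocks_zero₁₂, hi11]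
  have hγ22det : γ.toBlocks₂₂.det = B1 * (A1 / d) := by
    rw [hγ22, det_fromBlocks_zero₁₂, hi22]
  refine ⟨?_, ?_, ?_⟩
  · -- IM Q = IM Q⁻¹
    unfold IM
    rw [hi11, hi22, hidet]
    have : B1 / d * (A1 / d) / d⁻¹ = A1 * B1 / d := by
      field_simp
    rw [this]
  · -- IM Q = (1/2) * IM γ
    unfold IM
    rw [hγ11det, hγ22det, hγdet, ← hA1, ← hB1, ← hd]
    have harg : (A1 * (B1 / d) * (B1 * (A1 / d))) / 1 = (A1 * B1 / d) ^ 2 := by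
      field_simp
    rw [harg, Real.logb_pow]
    ring
  · -- IM Q = (1/2) * log₂ det γ₁₁
    unfold IM
    rw [hγ11det, ← hA1, ← hB1, ← hd, ← mul_div_assoc]
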